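/- Fix integers n ≥ 2 and 2 ≤ i ≤ n. The number of permutations σ of {1,…,n} such that 1 and n lie in the same cycle of σ and that cycle has length exactly i equals (i−1) · (n−2)!. -/

import Mathlib

set_option maxHeartbeats 2000000

open Equiv Equiv.Perm List Finset Function

variable {α : Type*} [Fintype α] [DecidableEq α]

private lemma orbit_card_of_mem_support (σ : Equiv.Perm α) (x : α) (hx : x ∈ σ.support) :
    Nat.card {y // σ.SameCycle x y} = (σ.cycleOf x).support.card := by
  classical
  rw [Nat.card_eq_fintype_card, Fintype.card_subtype]
  congr 1
  ext y
  simp only [Finset.mem_filter, Finset.mem_univ, true_and,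
    Equiv.Perm.mem_support_cycleOf_iff, hx, and_true]

private lemma orbit_card_of_fixed (σ : Equiv.Perm α) (x : α) (hx : σ x = x) :
    Nat.card {y // σ.SameCycle x y} = 1 := by
  classical
  have h : ∀ y, σ.SameCycle x y ↔ y = x := by
    intro y
    constructor
    · rintro ⟨k, rfl⟩
      exact zpow_apply_eq_self_of_apply_eq_self hx k
    · rintro rfl; exact Equiv.Perm.SameCycle.refl _ _
  rw [Nat.card_eq_fintype_card, Fintype.card_subtype]
  rw [show Finset.univ.filter (fun y => σ.SameCycle x y) = {x} by ext y; simp [h]]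
  simp

private lemma toList_eq_of_cycleOf_eq (σ τ : Equiv.Perm α) (x : α)
    (h : σ.cycleOf x = τ.cycleOf x) : σ.toList x = τ.toList x := by
  apply List.ext_getElem
  · simp [Equiv.Perm.length_toList, h]
  · intro j h1 h2
    have e1 := Equiv.Perm.getElem_toList σ x j h1
    have e2 := Equiv.Perm.getElem_toList τ x j h2
    rw [e1, e2, ← Equiv.Perm.cycleOf_pow_apply_self σ x j, h,
      Equiv.Perm.cycleOf_pow_apply_self]

private lemma card_fiber (l : List α) (hn : l.Nodup) (hl : 2 ≤ l.length) (x : α)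
    (hx : l.get ⟨0, by omega⟩ = x) :
    (Finset.univ.filter fun σ : Equiv.Perm α => σ.toList x = l).card
      = (Fintype.card α - l.length).factorial := by
  classical
  have hxl : x ∈ l := hx ▸ l.get_mem _
  rw [← Fintype.card_subtype]
  have key : ∀ τ : Equiv.Perm {y // y ∉ l},
      (List.formPerm l * Equiv.Perm.ofSubtype τ).toList x = l := by
    intro τ
    have hdisj : (List.formPerm l).Disjoint (Equiv.Perm.ofSubtype τ) := by
      intro y
      by_cases hy : y ∈ l
      · exact Or.inr (Equiv.Perm.ofSubtype_apply_of_not_mem τ (not_not_intro hy))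
      · exact Or.inl (List.formPerm_apply_of_notMem hy)
    have hco : (List.formPerm l * Equiv.Perm.ofSubtype τ).cycleOf x
        = (List.formPerm l).cycleOf x :=
      Equiv.Perm.cycleOf_mul_of_apply_right_eq_self hdisj.commute x
        (Equiv.Perm.ofSubtype_apply_of_not_mem τ (not_not_intro hxl))
    rw [toList_eq_of_cycleOf_eq _ _ x hco]
    have h2 := Equiv.Perm.toList_formPerm_nontrivial l hl hn
    rwa [hx] at h2
  have e : Equiv.Perm {y // y ∉ l} ≃ {σ : Equiv.Perm α // σ.toList x = l} := by
    refine Equiv.ofBijective (fun τ => ⟨List.formPerm l * Equiv.Perm.ofSubtype τ, key τ⟩) ⟨?_, ?_⟩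
    · intro τ τ' h
      have h2 : Equiv.Perm.ofSubtype τ = Equiv.Perm.ofSubtype τ' :=
        mul_left_cancel (congrArg Subtype.val h)
      ext y
      have h3 : Equiv.Perm.ofSubtype τ y.1 = Equiv.Perm.ofSubtype τ' y.1 := by rw [h2]
      rw [Equiv.Perm.ofSubtype_apply_of_mem τ y.2,
        Equiv.Perm.ofSubtype_apply_of_mem τ' y.2, ← Subtype.ext_iff] at h3
      simp only [Subtype.coe_eta] at h3
      exact congrArg Subtype.val h3
    · rintro ⟨σ, hσ⟩
      have hsupp : x ∈ σ.support := by
        rw [← Equiv.Perm.two_le_length_toList_iff_mem_support, hσ]; exact hl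
      have hmem : ∀ y, y ∈ l ↔ σ.SameCycle x y := by
        intro y; rw [← hσ, Equiv.Perm.mem_toList_iff]; simp [hsupp]
      have hiff : ∀ y, y ∉ l ↔ σ y ∉ l := by
        intro y; rw [not_iff_not, hmem, hmem, Equiv.Perm.sameCycle_apply_right]
      refine ⟨σ.subtypePerm (fun y => (hiff y).symm), ?_⟩
      apply Subtype.ext
      ext y
      show l.formPerm ((Equiv.Perm.ofSubtype (σ.subtypePerm (fun y => (hiff y).symm))) y) = σ y
      by_cases hy : y ∈ l
      · rw [show (Equiv.Perm.ofSubtype (σ.subtypePerm (fun y => (hiff y).symm))) y = y from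
          Equiv.Perm.ofSubtype_apply_of_not_mem _ (not_not_intro hy)]
        have hf : List.formPerm l = σ.cycleOf x := by
          rw [← hσ, Equiv.Perm.formPerm_toList]
        rw [hf, ((hmem y).1 hy).cycleOf_apply]
      · rw [show (Equiv.Perm.ofSubtype (σ.subtypePerm (fun y => (hiff y).symm))) y
            = (σ.subtypePerm (p := fun y => y ∉ l) (fun y => (hiff y).symm)) ⟨y, hy⟩ from
          Equiv.Perm.ofSubtype_apply_of_mem (p := fun y => y ∉ l) (σ.subtypePerm (fun y => (hiff y).symm)) hy, Equiv.Perm.subtypePerm_apply]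
        exact List.formPerm_apply_of_notMem ((hiff y).1 hy)
  rw [← Fintype.card_congr e, Fintype.card_perm, Fintype.card_subtype_compl]
  congr 2
  have h4 : Fintype.card {y // y ∈ l} = l.toFinset.card := by
    rw [← Fintype.card_coe]
    exact Fintype.card_congr (Equiv.subtypeEquivRight (by simp))
  rw [h4, List.toFinset_card_of_nodup hn]

private lemma card_words (k m : ℕ) (x z : Fin (m + 2)) (hxz : x ≠ z) :
    (Finset.univ.filter fun w : Fin (k + 2) → Fin (m + 2) =>
        Function.Injective w ∧ w 0 = x ∧ ∃ j, w j = z).card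
      = (k + 1) * m.descFactorial k := by
  classical
  rw [← Fintype.card_subtype]
  have hDcard : Fintype.card {y : Fin (m + 2) // y ≠ x ∧ y ≠ z} = m := by
    rw [Fintype.card_subtype]
    rw [show Finset.univ.filter (fun y : Fin (m + 2) => y ≠ x ∧ y ≠ z)
        = Finset.univ \ {x, z} by ext y; simp [not_or]]
    rw [Finset.card_sdiff_of_subset (by simp)]
    rw [Finset.card_insert_of_notMem (by simp [hxz]), Finset.card_singleton]
    simp
  set D := {y : Fin (m + 2) // y ≠ x ∧ y ≠ z} with hD
  set t : Fin (k + 1) → (Fin k ↪ D) → Fin (k + 1) → Fin (m + 2) :=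
    fun j u => j.insertNth z (fun b => (u b).1) with ht
  have htmem : ∀ j u a, t j u a = z ↔ a = j := by
    intro j u a
    rcases eq_or_ne a j with rfl | h
    · simp [ht, Fin.insertNth_apply_same]
    · obtain ⟨b, rfl⟩ := Fin.exists_succAbove_eq h
      simp only [ht, Fin.insertNth_apply_succAbove]
      exact iff_of_false (u b).2.2 (Fin.succAbove_ne j b)
  have htx : ∀ j u a, t j u a ≠ x := by
    intro j u a
    rcases eq_or_ne a j with rfl | h
    · simpa [ht, Fin.insertNth_apply_same] using hxz.symm
    · obtain ⟨b, rfl⟩ := Fin.exists_succAbove_eq h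
      simpa [ht, Fin.insertNth_apply_succAbove] using (u b).2.1
  have htinj : ∀ j u, Function.Injective (t j u) := by
    intro j u a a' h
    rcases eq_or_ne a j with rfl | ha
    · have : t a u a' = z := by rw [← h]; simp [ht, Fin.insertNth_apply_same]
      exact ((htmem a u a').1 this).symm
    · rcases eq_or_ne a' j with rfl | ha'
      · have : t a' u a = z := by rw [h]; simp [ht, Fin.insertNth_apply_same]
        exact (htmem a' u a).1 this
      · obtain ⟨b, rfl⟩ := Fin.exists_succAbove_eq ha
        obtain ⟨b', rfl⟩ := Fin.exists_succAbove_eq ha'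
        simp only [ht, Fin.insertNth_apply_succAbove] at h
        rw [u.injective (Subtype.coe_injective h)]
  let G : Fin (k + 1) × (Fin k ↪ D) → {w : Fin (k + 2) → Fin (m + 2) //
      Function.Injective w ∧ w 0 = x ∧ ∃ j, w j = z} := fun p =>
    ⟨Fin.cons x (t p.1 p.2), by
      rw [Fin.cons_injective_iff]
      exact ⟨by rintro ⟨a, ha⟩; exact htx _ _ a ha, htinj _ _⟩, by
      simp [Fin.cons_zero], ⟨p.1.succ, by simp [Fin.cons_succ, ht, Fin.insertNth_apply_same]⟩⟩
  have hGbij : Function.Bijective G := by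
    constructor
    · rintro ⟨j, u⟩ ⟨j', u'⟩ h
      have hw := congrArg Subtype.val h
      have htl : t j u = t j' u' := by
        funext a
        have := congrFun hw a.succ
        simpa [G, Fin.cons_succ] using this
      have hj : j = j' := by
        refine (htmem j' u' j).1 ?_
        rw [← htl]; simp [ht, Fin.insertNth_apply_same]
      subst hj
      have hu : u = u' := by
        refine Function.Embedding.ext fun b => Subtype.ext ?_
        have h5 := congrFun htl (j.succAbove b)
        have h6 : (u b : Fin (m + 2)) = u' b := by
          simpa [ht, Fin.insertNth_apply_succAbove] using h5
        exact h6
      rw [hu]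
    · rintro ⟨w, hw, hw0, a, ha⟩
      have ha0 : a ≠ 0 := by rintro rfl; exact hxz (hw0 ▸ ha ▸ rfl)
      obtain ⟨c, rfl⟩ : ∃ c, a = c.succ := ⟨a.pred ha0, (Fin.succ_pred _ _).symm⟩
      have hwinj2 : ∀ b : Fin k, w (c.succAbove b).succ ≠ z := by
        intro b hb
        rw [← ha] at hb
        exact Fin.succAbove_ne c b (Fin.succ_injective _ (hw hb))
      have hwx : ∀ b : Fin k, w (c.succAbove b).succ ≠ x := by
        intro b hb
        rw [← hw0] at hb
        exact Fin.succ_ne_zero _ (hw hb)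
      refine ⟨⟨c, ⟨fun b => ⟨w (c.succAbove b).succ, hwx b, hwinj2 b⟩, ?_⟩⟩, ?_⟩
      · intro b b' hbb
        have := hw (congrArg Subtype.val hbb)
        exact Fin.succAbove_right_injective (Fin.succ_injective _ this)
      · apply Subtype.ext
        funext a
        refine Fin.cases ?_ (fun d => ?_) a
        · simp [G, Fin.cons_zero, hw0]
        · simp only [G, Fin.cons_succ]
          rcases eq_or_ne d c with rfl | hd
          · simp only [ht, Fin.insertNth_apply_same]; exact ha.symm
          · obtain ⟨b, rfl⟩ := Fin.exists_succAbove_eq hd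
            simp [ht, Fin.insertNth_apply_succAbove]
            rfl
  rw [← Fintype.card_of_bijective hGbij, Fintype.card_prod, Fintype.card_fin,
    Fintype.card_embedding_eq, hDcard, Fintype.card_fin]

theorem stmt5 (n i : ℕ) (hn : 2 ≤ n) (hi : 2 ≤ i) (hin : i ≤ n) :
    Nat.card {σ : Equiv.Perm (Fin n) //
        σ.SameCycle ⟨0, by omega⟩ ⟨n - 1, by omega⟩ ∧
        Nat.card {y : Fin n // σ.SameCycle ⟨0, by omega⟩ y} = i} =
      (i - 1) * (n - 2).factorial := by
  classical
  obtain ⟨m, rfl⟩ : ∃ m, n = m + 2 := ⟨n - 2, by omega⟩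
  obtain ⟨k, rfl⟩ : ∃ k, i = k + 2 := ⟨i - 2, by omega⟩
  have hkm : k ≤ m := by omega
  set x : Fin (m + 2) := ⟨0, by omega⟩ with hxdef
  set z : Fin (m + 2) := ⟨m + 2 - 1, by omega⟩ with hzdef
  have hxz : x ≠ z := by
    simp only [hxdef, hzdef, ne_eq, Fin.mk.injEq]
    omega
  have hPiff : ∀ σ : Equiv.Perm (Fin (m + 2)),
      (σ.SameCycle x z ∧ Nat.card {y : Fin (m + 2) // σ.SameCycle x y} = k + 2)
        ↔ ((σ.toList x).length = k + 2 ∧ z ∈ σ.toList x) := by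
    intro σ
    constructor
    · rintro ⟨h1, h2⟩
      have hsupp : x ∈ σ.support := by
        by_contra hs
        rw [orbit_card_of_fixed σ x (by simpa using hs)] at h2
        omega
      refine ⟨?_, (Equiv.Perm.mem_toList_iff).2 ⟨h1, hsupp⟩⟩
      rw [Equiv.Perm.length_toList, ← orbit_card_of_mem_support σ x hsupp, h2]
    · rintro ⟨h1, h2⟩
      have hsupp : x ∈ σ.support := by
        rw [← Equiv.Perm.two_le_length_toList_iff_mem_support]
        omega
      refine ⟨((Equiv.Perm.mem_toList_iff).1 h2).1, ?_⟩
      rw [orbit_card_of_mem_support σ x hsupp, ← Equiv.Perm.length_toList, h1]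
  rw [Nat.card_congr (Equiv.subtypeEquivRight hPiff), Nat.card_eq_fintype_card,
    Fintype.card_subtype]
  set s := Finset.univ.filter (fun σ : Equiv.Perm (Fin (m + 2)) =>
    (σ.toList x).length = k + 2 ∧ z ∈ σ.toList x) with hs
  set LS := s.image (fun σ => σ.toList x) with hLS
  rw [Finset.card_eq_sum_card_fiberwise
    (f := fun σ => σ.toList x) (t := LS) (fun σ hσ => Finset.mem_image_of_mem _ hσ)]
  have hLSprop : ∀ l ∈ LS, l.Nodup ∧ l.length = k + 2 ∧ z ∈ l ∧
      ∃ hh : 0 < l.length, l.get ⟨0, hh⟩ = x := by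
    intro l hl
    obtain ⟨σ, hσs, rfl⟩ := Finset.mem_image.1 hl
    obtain ⟨h1, h2⟩ := (Finset.mem_filter.1 hσs).2
    have hsupp : x ∈ σ.support := by
      rw [← Equiv.Perm.two_le_length_toList_iff_mem_support]
      omega
    exact ⟨Equiv.Perm.nodup_toList σ x, h1, h2,
      Equiv.Perm.length_toList_pos_of_mem_support _ _ hsupp,
      Equiv.Perm.toList_getElem_zero _ _ hsupp⟩
  have hfib : ∀ l ∈ LS, (s.filter fun σ => σ.toList x = l).card = (m - k).factorial := by
    intro l hl
    obtain ⟨hnd, hlen, hz, hh, hget⟩ := hLSprop l hl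
    have heq : (s.filter fun σ => σ.toList x = l)
        = Finset.univ.filter fun σ : Equiv.Perm (Fin (m + 2)) => σ.toList x = l := by
      ext σ
      simp only [hs, Finset.mem_filter, Finset.mem_univ, true_and, and_iff_right_iff_imp]
      intro hσ
      rw [hσ]
      exact ⟨hlen, hz⟩
    rw [heq, card_fiber l hnd (by omega) x hget]
    congr 1
    simp only [Fintype.card_fin, hlen]
    omega
  rw [Finset.sum_congr rfl hfib, Finset.sum_const, smul_eq_mul]
  have hLScard : LS.card = (k + 1) * m.descFactorial k := by
    rw [← card_words k m x z hxz]
    apply Finset.card_bij' (fun l _ => fun j : Fin (k + 2) => l.getD j x)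
      (fun w _ => List.ofFn w)
    · intro l hl
      obtain ⟨hnd, hlen, hz, hh, hget⟩ := hLSprop l hl
      have hgetD : ∀ j : Fin (k + 2), l.getD (j : ℕ) x = l.get ⟨j, by omega⟩ := by
        intro j
        rw [List.getD_eq_getElem l x (by omega)]
        exact (List.get_eq_getElem (l := l) (i := ⟨(j : ℕ), by omega⟩)).symm
      simp only [Finset.mem_filter, Finset.mem_univ, true_and]
      refine ⟨?_, ?_, ?_⟩
      · intro a a' haa
        have haa' : l.getD (a : ℕ) x = l.getD (a' : ℕ) x := haa
        rw [hgetD, hgetD] at haa'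
        have := List.nodup_iff_injective_get.1 hnd haa'
        simpa [Fin.ext_iff] using this
      · rw [hgetD]
        convert hget
        simp
      · obtain ⟨⟨j, hj⟩, hjz⟩ := List.mem_iff_get.1 hz
        refine ⟨⟨j, by omega⟩, ?_⟩
        rw [hgetD]
        convert hjz
    · intro w hw
      simp only [Finset.mem_filter, Finset.mem_univ, true_and] at hw
      obtain ⟨hwi, hw0, j, hjz⟩ := hw
      set σ := List.formPerm (List.ofFn w) with hσ
      have hnd : (List.ofFn w).Nodup := (List.nodup_ofFn).2 hwi
      have hlen : (List.ofFn w).length = k + 2 := by simp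
      have htl : σ.toList x = List.ofFn w := by
        have h7 := Equiv.Perm.toList_formPerm_nontrivial (List.ofFn w) (by omega) hnd
        convert h7 using 2
        rw [← hw0, List.get_ofFn]
        congr 1
      rw [hLS]
      apply Finset.mem_image.2
      refine ⟨σ, ?_, htl⟩
      rw [hs, Finset.mem_filter]
      refine ⟨Finset.mem_univ _, ?_, ?_⟩
      · rw [htl]; exact hlen
      · rw [htl, List.mem_ofFn]
        exact ⟨j, hjz⟩
    · intro l hl
      obtain ⟨hnd, hlen, hz, hh, hget⟩ := hLSprop l hl
      apply List.ext_getElem (by simp [hlen])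
      intro j h1 h2
      simp only [List.getElem_ofFn]
      rw [List.getD_eq_getElem l x]
    · intro w hw
      funext j
      rw [List.getD_eq_getElem _ x (by simp; omega), List.getElem_ofFn]
  rw [hLScard]
  have harr : (k + 1) * m.descFactorial k * (m - k).factorial = (k + 1) * m.factorial := by
    rw [mul_assoc, mul_comm (m.descFactorial k), Nat.factorial_mul_descFactorial hkm]
  rw [harr]
  congr 1
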